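/- arXiv:1411.4843 — 2 statements merged into one kernel-verified Lean document; each statement's English description precedes it below -/
import Mathlib

section
/- Let p be a prime, r = pⁿ, and let Γ be a totally ordered abelian group with a valuation ν* on a field K* of residue characteristic p. Suppose z, σ_1(z), …, σ_r(z) ∈ V_{ν*} all have value ν*(z) and pairwise ν*(σ_j(z) − z) > ν*(z). Then for 0 < i < pⁿ, the i-th elementary symmetric polynomial S_i of σ_1(z),…,σ_r(z) satisfies ν*(S_i) > i·ν*(z). -/
lemma prod_sub_pow_lt {Kstar : Type*} [Field Kstar]
    {Γ₀ : Type*} [LinearOrderedCommGroupWithZero Γ₀]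
    (v : Valuation Kstar Γ₀) {ι : Type*} (z : Kstar) (hz : v z ≠ 0) (a : ι → Kstar)
    (t : Finset ι) (hva : ∀ j, v (a j) = v z) (hclose : ∀ j, v (a j - z) < v z) :
    v (∏ j ∈ t, a j - z ^ t.card) < v z ^ t.card := by
  induction t using Finset.cons_induction with
  | empty => simpa using pos_of_ne_zero (pow_ne_zero 0 hz)
  | cons k s hk ih =>
    rw [Finset.prod_cons, Finset.card_cons]
    have key : a k * ∏ j ∈ s, a j - z ^ (s.card + 1)
        = a k * (∏ j ∈ s, a j - z ^ s.card) + (a k - z) * z ^ s.card := by ring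
    rw [key]
    refine v.map_add_lt ?_ ?_
    · rw [map_mul, hva k, pow_succ']
      exact mul_lt_mul_of_pos_left ih (zero_lt_iff.mpr hz)
    · rw [map_mul, map_pow, pow_succ, mul_comm (v (a k - z))]
      exact mul_lt_mul_of_pos_left (hclose k) (zero_lt_iff.mpr (pow_ne_zero _ hz))

/-- Let `p` be a prime, `r = pⁿ`, and `ν*` a valuation on a field `K*`
of residue characteristic `p`.  Suppose `z, σ_1(z), …, σ_r(z) ∈ V_{ν*}` all have value
`ν*(z)` and `ν*(σ_j(z) − z) > ν*(z)` for each `j`.  Then for `0 < i < pⁿ` the `i`-th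
elementary symmetric polynomial `S_i` of `σ_1(z), …, σ_r(z)` satisfies
`ν*(S_i) > i·ν*(z)`.  (Multiplicative notation: `ν(x) > γ` is `v x < γ`.) -/
theorem statement9 {Kstar : Type*} [Field Kstar]
    {Γ₀ : Type*} [LinearOrderedCommGroupWithZero Γ₀]
    (vstar : Valuation Kstar Γ₀)
    (p n : ℕ) (hp : p.Prime)
    -- the residue characteristic of `V_{ν*}` is `p`
    (hresp : CharP (IsLocalRing.ResidueField ↥vstar.valuationSubring) p)
    (z : Kstar) (hz0 : z ≠ 0) (hzV : vstar z ≤ 1)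
    (a : Fin (p ^ n) → Kstar)
    (haV : ∀ j, vstar (a j) ≤ 1)
    -- each `σ_j(z)` has the same value as `z`
    (hva : ∀ j, vstar (a j) = vstar z)
    -- `ν*(σ_j(z) − z) > ν*(z)`
    (hclose : ∀ j, vstar (a j - z) < vstar z) :
    ∀ i : ℕ, 0 < i → i < p ^ n →
      vstar ((Multiset.map a Finset.univ.val).esymm i) < (vstar z) ^ i := by
  intro i hi0 hi
  have hz : vstar z ≠ 0 := by simpa using hz0
  have hzpow : vstar z ^ i ≠ 0 := pow_ne_zero _ hz
  -- `vstar p < 1`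
  have hvp : vstar (p : Kstar) < 1 := by
    have h0 : ((p : ℕ) : IsLocalRing.ResidueField ↥vstar.valuationSubring) = 0 :=
      CharP.cast_eq_zero _ p
    have hmem : ((p : ℕ) : ↥vstar.valuationSubring) ∈
        IsLocalRing.maximalIdeal ↥vstar.valuationSubring := by
      rwa [← IsLocalRing.residue_eq_zero_iff, map_natCast]
    have : ((p : Kstar)) ∈ vstar.valuationSubring.nonunits := by
      have := (ValuationSubring.coe_mem_nonunits_iff (A := vstar.valuationSubring)).mpr hmem
      simpa using this
    have h1 : vstar.valuationSubring.valuation (p : Kstar) < 1 :=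
      (ValuationSubring.mem_nonunits_iff _).mp this
    exact ((vstar.isEquiv_valuation_valuationSubring).lt_one_iff_lt_one).mpr h1
  -- rewrite esymm as a sum over subsets
  rw [Finset.esymm_map_val]
  set P := Finset.powersetCard i (Finset.univ : Finset (Fin (p ^ n))) with hP
  have hnat : ∀ m : ℕ, vstar (m : Kstar) ≤ 1 := by
    intro m
    induction m with
    | zero => simp
    | succ m ih =>
      push_cast
      exact le_trans (vstar.map_add _ _) (by simp [ih])
  -- the binomial coefficient term has small valuation
  have hCz : vstar (((p ^ n).choose i : ℕ) * z ^ i) < vstar z ^ i := by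
    obtain ⟨m, hm⟩ := hp.dvd_choose_pow hi0.ne' hi.ne
    rw [hm]
    push_cast
    rw [map_mul, map_mul, map_pow]
    have h1 : vstar (p : Kstar) * vstar (m : Kstar) < 1 :=
      lt_of_le_of_lt (mul_le_of_le_one_right' (hnat m)) hvp
    rw [mul_comm]
    simpa using mul_lt_mul_of_pos_left h1 (zero_lt_iff.mpr hzpow)
  -- decompose the sum
  have hcard : P.card = (p ^ n).choose i := by
    simp [hP, Finset.card_powersetCard]
  have key : (∑ t ∈ P, ∏ j ∈ t, a j)
      = (∑ t ∈ P, (∏ j ∈ t, a j - z ^ i)) + (((p ^ n).choose i : ℕ) : Kstar) * z ^ i := by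
    rw [Finset.sum_sub_distrib, Finset.sum_const, ← hcard, nsmul_eq_mul]
    ring
  rw [key]
  refine vstar.map_add_lt ?_ hCz
  refine vstar.map_sum_lt hzpow ?_
  intro t ht
  have hct : t.card = i := (Finset.mem_powersetCard.mp ht).2
  rw [← hct]
  exact prod_sub_pow_lt vstar z hz a t (fun j => hva j) (fun j => hclose j)
end

section
/- Let k be a commutative ring, M a finitely generated submonoid of ℤⁿ_{≥0} (so that k[M] ⊆ k[z_1,…,z_n]), and M̃ = {v ∈ ℤⁿ | mv ∈ M for some m ∈ ℤ_{>0}} ∩ ℤⁿ_{≥0} the saturation of M inside ℤⁿ_{≥0}. If k is an integrally closed domain, then k[z^v | v ∈ M̃] is the integral closure of k[z^v | v ∈ M] in k[z_1,…,z_n]. -/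
noncomputable section

open MvPolynomial Pointwise Matrix

private theorem myFarkas {n : ℕ} : ∀ (l : ℕ) (w : Fin l → (Fin n → ℚ)) (v : Fin n → ℚ),
    (¬ ∃ c : Fin l → ℚ, (∀ i, 0 ≤ c i) ∧ ∑ i, c i • w i = v) →
    ∃ y : Fin n → ℚ, (∀ i, 0 ≤ w i ⬝ᵥ y) ∧ v ⬝ᵥ y < 0 := by
  intro l
  induction l with
  | zero =>
      intro w v hv
      have hv0 : v ≠ 0 := by
        rintro rfl
        exact hv ⟨0, fun i => le_rfl, by simp⟩
      refine ⟨-v, fun i => (i.elim0), ?_⟩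
      have hlt : 0 < v ⬝ᵥ v := by
        have hne : v ⬝ᵥ v ≠ 0 := fun h => hv0 (dotProduct_self_eq_zero.mp h)
        have h0 : 0 ≤ v ⬝ᵥ v := Finset.sum_nonneg fun i _ => mul_self_nonneg _
        exact lt_of_le_of_ne h0 (Ne.symm hne)
      simpa [dotProduct_neg] using neg_neg_of_pos hlt
  | succ l ih =>
      intro w v hv
      have htail : ¬ ∃ c : Fin l → ℚ, (∀ i, 0 ≤ c i) ∧ ∑ i, c i • w i.succ = v := by
        rintro ⟨c, hc, hsum⟩
        refine hv ⟨fun i => Fin.cases 0 c i, fun i => ?_, ?_⟩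
        · refine Fin.cases le_rfl (fun j => hc j) i
        · rw [Fin.sum_univ_succ]
          simpa using hsum
      obtain ⟨y, hy, hvy⟩ := ih (fun i => w i.succ) v htail
      by_cases h0 : 0 ≤ w 0 ⬝ᵥ y
      · exact ⟨y, fun i => Fin.cases h0 (fun j => hy j) i, hvy⟩
      · push_neg at h0
        set W := w 0 ⬝ᵥ y with hW
        have hWne : W ≠ 0 := ne_of_lt h0
        set pr : (Fin n → ℚ) → (Fin n → ℚ) := fun u => u - ((u ⬝ᵥ y) / W) • w 0 with hpr
        have hproj : ¬ ∃ c : Fin l → ℚ, (∀ i, 0 ≤ c i) ∧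
            ∑ i, c i • pr (w i.succ) = pr v := by
          rintro ⟨c, hc, hsum⟩
          set t : ℚ := (v ⬝ᵥ y - ∑ i, c i * (w i.succ ⬝ᵥ y)) / W with ht
          have htpos : 0 ≤ t := by
            rw [ht, div_nonneg_iff]
            right
            constructor
            · have : 0 ≤ ∑ i, c i * (w i.succ ⬝ᵥ y) :=
                Finset.sum_nonneg fun i _ => mul_nonneg (hc i) (hy i)
              linarith
            · exact le_of_lt h0
          refine hv ⟨fun i => Fin.cases t c i, fun i => ?_, ?_⟩
          · refine Fin.cases htpos (fun j => hc j) i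
          · rw [Fin.sum_univ_succ]
            simp only [Fin.cases_zero, Fin.cases_succ]
            set S : ℚ := ∑ i, c i * (w i.succ ⬝ᵥ y / W) with hS
            have hexp : ∑ i, c i • w i.succ = pr v + S • w 0 := by
              rw [← hsum]
              simp only [hpr, smul_sub, Finset.sum_sub_distrib, smul_smul, ← Finset.sum_smul]
              abel
            have hscal : t + S = v ⬝ᵥ y / W := by
              rw [ht, hS]
              simp only [← mul_div_assoc]
              rw [← Finset.sum_div, ← add_div, sub_add_cancel]
            calc t • w 0 + ∑ i, c i • w i.succ
                = pr v + (t + S) • w 0 := by rw [hexp]; module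
              _ = pr v + (v ⬝ᵥ y / W) • w 0 := by rw [hscal]
              _ = v := by simp [hpr]
        obtain ⟨z, hz, hvz⟩ := ih (fun i => pr (w i.succ)) (pr v) hproj
        have key : ∀ u, pr u ⬝ᵥ z = u ⬝ᵥ (z - ((w 0 ⬝ᵥ z) / W) • y) := by
          intro u
          simp only [hpr, sub_dotProduct, dotProduct_sub, smul_dotProduct, dotProduct_smul,
            smul_eq_mul]
          rw [dotProduct_comm (w 0) z]
          ring
        refine ⟨z - ((w 0 ⬝ᵥ z) / W) • y, ?_, ?_⟩
        · intro i
          refine Fin.cases ?_ (fun j => by rw [← key]; exact hz j) i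
          have h00 : w 0 ⬝ᵥ (z - ((w 0 ⬝ᵥ z) / W) • y) = 0 := by
            simp only [dotProduct_sub, dotProduct_smul, smul_eq_mul, ← hW]
            rw [div_mul_cancel₀ _ hWne, sub_self]
          rw [h00]
        · rw [← key]; exact hvz

set_option maxHeartbeats 1000000 in
set_option synthInstance.maxHeartbeats 400000 in
/-- Bruns–Gubeladze, Lemma 4.40.  Let `k` be an integrally closed
domain, `M` a finitely generated submonoid of `ℤⁿ_{≥0}` and
`M̃ = {v | mv ∈ M for some m > 0}` its saturation inside `ℤⁿ_{≥0}`.  Then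
`k[z^v | v ∈ M̃]` is the integral closure of `k[z^v | v ∈ M]` in `k[z_1,…,z_n]`:
an element of the polynomial ring lies in `k[z^v | v ∈ M̃]` if and only if it is
integral over `k[z^v | v ∈ M]`. -/
theorem statement11 (k : Type*) [CommRing k] [IsDomain k] [IsIntegrallyClosed k]
    (n : ℕ) (M : AddSubmonoid (Fin n →₀ ℕ)) (hfg : M.FG)
    (Msat : Set (Fin n →₀ ℕ)) (hMsat : Msat = {v | ∃ m : ℕ, 0 < m ∧ m • v ∈ M})
    (A : Subalgebra k (MvPolynomial (Fin n) k))
    (hA : A = Algebra.adjoin k ((fun v => MvPolynomial.monomial v (1 : k)) '' (M : Set (Fin n →₀ ℕ))))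
    (Asat : Subalgebra k (MvPolynomial (Fin n) k))
    (hAsat : Asat = Algebra.adjoin k ((fun v => MvPolynomial.monomial v (1 : k)) '' Msat)) :
    ∀ x : MvPolynomial (Fin n) k, x ∈ Asat ↔ IsIntegral ↥A x := by
  classical
  -- the embedding of exponent vectors into `ℚⁿ`
  set e : (Fin n →₀ ℕ) → (Fin n → ℚ) := fun u i => (u i : ℚ) with he
  have e_add : ∀ a b, e (a + b) = e a + e b := by
    intro a b; funext i; simp [he, Finsupp.add_apply]
  have e_zero : e 0 = 0 := by funext i; simp [he]
  have e_smul : ∀ (m : ℕ) a, e (m • a) = (m : ℚ) • e a := by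
    intro m a; funext i; simp [he, Finsupp.smul_apply, mul_comm]
  have e_inj : Function.Injective e := by
    intro a b hab
    ext i
    have h := congrFun hab i
    simp only [he] at h
    exact_mod_cast h
  -- support of elements of `A` lies in `M`
  have hsupp_mem : ∀ a : MvPolynomial (Fin n) k, a ∈ A → ∀ u ∈ a.support, u ∈ M := by
    intro a ha
    rw [hA] at ha
    induction ha using Algebra.adjoin_induction with
    | mem g hg =>
        obtain ⟨v, hvM, rfl⟩ := hg
        intro u hu
        have := support_monomial_subset hu
        rw [Finset.mem_singleton] at this
        subst this
        exact hvM
    | algebraMap r =>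
        intro u hu
        have h1 : (algebraMap k (MvPolynomial (Fin n) k) r) = C r := rfl
        rw [h1, C_apply] at hu
        have := support_monomial_subset hu
        rw [Finset.mem_singleton] at this
        subst this
        exact M.zero_mem
    | add f g hf hg ihf ihg =>
        intro u hu
        rcases Finset.mem_union.mp (support_add hu) with h | h
        · exact ihf u h
        · exact ihg u h
    | mul f g hf hg ihf ihg =>
        intro u hu
        obtain ⟨a, ha', b, hb', rfl⟩ := Finset.mem_add.mp (support_mul f g hu)
        exact M.add_mem (ihf a ha') (ihg b hb')
  -- the key weight bound for integral elements
  have key : ∀ y : Fin n → ℚ, (∀ u ∈ M, 0 ≤ e u ⬝ᵥ y) →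
      ∀ x : MvPolynomial (Fin n) k, IsIntegral ↥A x → ∀ u ∈ x.support, 0 ≤ e u ⬝ᵥ y := by
    intro y hy x hx u hu
    by_contra hneg
    push_neg at hneg
    set L : (Fin n →₀ ℕ) → ℚ := fun w => e w ⬝ᵥ y with hL
    have hLadd : ∀ a b, L (a + b) = L a + L b := by
      intro a b; rw [hL]; simp only [e_add, add_dotProduct]
    have hL0 : L 0 = 0 := by rw [hL]; simp only [e_zero, zero_dotProduct]
    -- the minimal weight of the support of x
    have hsx : x.support.Nonempty := ⟨u, hu⟩
    have hsimg : (x.support.image L).Nonempty := hsx.image L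
    set s : ℚ := (x.support.image L).min' hsimg with hs
    have hs_le : ∀ w ∈ x.support, s ≤ L w := fun w hw =>
      Finset.min'_le _ _ (Finset.mem_image_of_mem L hw)
    have hs_neg : s < 0 := lt_of_le_of_lt (hs_le u hu) hneg
    obtain ⟨u₀, hu₀x, hu₀s⟩ := Finset.mem_image.mp ((x.support.image L).min'_mem hsimg)
    -- lower bound lemmas for supports
    have hone : ∀ w ∈ (1 : MvPolynomial (Fin n) k).support, w = 0 := by
      intro w hw
      rw [← C_1, C_apply] at hw
      simpa using support_monomial_subset hw
    have hLB_mul : ∀ (c d : ℚ) (f g : MvPolynomial (Fin n) k),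
        (∀ w ∈ f.support, c ≤ L w) → (∀ w ∈ g.support, d ≤ L w) →
        ∀ w ∈ (f * g).support, c + d ≤ L w := by
      intro c d f g hf hg w hw
      obtain ⟨a, ha', b, hb', rfl⟩ := Finset.mem_add.mp (support_mul f g hw)
      rw [hLadd]
      exact add_le_add (hf a ha') (hg b hb')
    have hLB_pow : ∀ (c : ℚ) (f : MvPolynomial (Fin n) k) (m : ℕ),
        (∀ w ∈ f.support, c ≤ L w) → ∀ w ∈ (f ^ m).support, (m : ℚ) * c ≤ L w := by
      intro c f m hf
      induction m with
      | zero =>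
          intro w hw
          rw [pow_zero] at hw
          rw [hone w hw, hL0]
          simp
      | succ m ihm =>
          intro w hw
          rw [pow_succ] at hw
          have := hLB_mul ((m : ℚ) * c) c (f ^ m) f ihm hf w hw
          push_cast
          linarith
    have hEq_mul : ∀ (c d : ℚ) (f g : MvPolynomial (Fin n) k),
        (∀ w ∈ f.support, L w = c) → (∀ w ∈ g.support, L w = d) →
        ∀ w ∈ (f * g).support, L w = c + d := by
      intro c d f g hf hg w hw
      obtain ⟨a, ha', b, hb', rfl⟩ := Finset.mem_add.mp (support_mul f g hw)
      rw [hLadd, hf a ha', hg b hb']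
    have hEq_pow : ∀ (f : MvPolynomial (Fin n) k) (m : ℕ),
        (∀ w ∈ f.support, L w = s) → ∀ w ∈ (f ^ m).support, L w = (m : ℚ) * s := by
      intro f m hf
      induction m with
      | zero =>
          intro w hw
          rw [pow_zero] at hw
          rw [hone w hw, hL0]
          simp
      | succ m ihm =>
          intro w hw
          rw [pow_succ] at hw
          have := hEq_mul ((m : ℚ) * s) s (f ^ m) f ihm hf w hw
          push_cast
          linarith
    -- the minimal part of x
    set Sfin : Finset (Fin n →₀ ℕ) := x.support.filter (fun w => L w = s) with hSfin
    set xm : MvPolynomial (Fin n) k := ∑ w ∈ Sfin, monomial w (coeff w x) with hxm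
    have hxm_coeff : ∀ w, coeff w xm = if w ∈ Sfin then coeff w x else 0 := by
      intro w
      rw [hxm, coeff_sum]
      simp only [coeff_monomial]
      exact Finset.sum_ite_eq' Sfin w (fun w' => coeff w' x)
    have hxm_supp : ∀ w ∈ xm.support, w ∈ x.support ∧ L w = s := by
      intro w hw
      have hcw := mem_support_iff.mp hw
      rw [hxm_coeff] at hcw
      by_cases h : w ∈ Sfin
      · exact Finset.mem_filter.mp h
      · simp [h] at hcw
    have hxm_eqs : ∀ w ∈ xm.support, L w = s := fun w hw => (hxm_supp w hw).2
    have hxm_ne : xm ≠ 0 := by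
      intro h
      have : coeff u₀ xm = coeff u₀ x := by
        rw [hxm_coeff]
        rw [if_pos (Finset.mem_filter.mpr ⟨hu₀x, hu₀s⟩)]
      rw [h] at this
      exact mem_support_iff.mp hu₀x (by simpa using this.symm)
    have hxp_supp : ∀ w ∈ (x - xm).support, s < L w := by
      intro w hw
      have hcw := mem_support_iff.mp hw
      rw [coeff_sub, hxm_coeff] at hcw
      by_cases h : w ∈ Sfin
      · rw [if_pos h, sub_self] at hcw
        exact absurd rfl hcw
      · rw [if_neg h, sub_zero] at hcw
        have hwx : w ∈ x.support := mem_support_iff.mpr hcw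
        have : L w ≠ s := fun hws => h (Finset.mem_filter.mpr ⟨hwx, hws⟩)
        exact lt_of_le_of_ne (hs_le w hwx) (Ne.symm this)
    -- the integral equation
    obtain ⟨p, hpm, hp0⟩ := hx
    rw [← Polynomial.aeval_def] at hp0
    set N : ℕ := p.natDegree with hN
    have hN1 : 1 ≤ N := by
      by_contra hcon
      push_neg at hcon
      interval_cases N
      · have hp1 : p = 1 := (Polynomial.Monic.natDegree_eq_zero hpm).mp (by omega)
        rw [hp1] at hp0
        simp at hp0
    have heq : x ^ N = - ∑ i ∈ Finset.range N,
        ((p.coeff i : MvPolynomial (Fin n) k)) * x ^ i := by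
      have h1 := Polynomial.aeval_eq_sum_range (R := ↥A) (p := p) x
      rw [hp0, Finset.sum_range_succ, ← hN, hpm.coeff_natDegree, one_smul] at h1
      have h2 : ∀ (a : ↥A) (z : MvPolynomial (Fin n) k), a • z = ↑a * z := by
        intro a z; rw [Algebra.smul_def]; rfl
      simp only [h2] at h1
      have h3 := h1.symm
      rw [add_comm] at h3
      exact eq_neg_of_add_eq_zero_left h3
    -- geometric identity: x^N - xm^N = (sum) * (x - xm)
    have hgeom : x ^ N - xm ^ N
        = (∑ j ∈ Finset.range N, x ^ j * xm ^ (N - 1 - j)) * (x - xm) :=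
      (geom_sum₂_mul x xm N).symm
    have hsum_LB : ∀ w ∈ (∑ j ∈ Finset.range N, x ^ j * xm ^ (N - 1 - j)).support,
        ((N : ℚ) - 1) * s ≤ L w := by
      intro w hw
      obtain ⟨j, hj, hwj⟩ := Finset.mem_biUnion.mp (support_sum hw)
      rw [Finset.mem_range] at hj
      have h1 := hLB_pow s x j hs_le
      have h2 := hLB_pow s xm (N - 1 - j) (fun w hw => (hxm_eqs w hw).ge)
      have h3 := hLB_mul ((j : ℚ) * s) (((N - 1 - j : ℕ) : ℚ) * s) _ _ h1 h2 w hwj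
      have hj' : ((N - 1 - j : ℕ) : ℚ) = (N : ℚ) - 1 - j := by
        have : j ≤ N - 1 := by omega
        push_cast [Nat.cast_sub this, Nat.cast_sub hN1]
        ring
      rw [hj'] at h3
      nlinarith [h3]
    have hdiff : ∀ w ∈ (x ^ N - xm ^ N).support, (N : ℚ) * s < L w := by
      intro w hw
      rw [hgeom] at hw
      obtain ⟨a, ha', b, hb', rfl⟩ := Finset.mem_add.mp (support_mul _ _ hw)
      have h1 := hsum_LB a ha'
      have h2 := hxp_supp b hb'
      rw [hLadd]
      nlinarith [h1, h2]
    -- pick a monomial of xm ^ N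
    have hxmN : xm ^ N ≠ 0 := pow_ne_zero N hxm_ne
    obtain ⟨us, hus⟩ := support_nonempty.mpr hxmN
    have hLus : L us = (N : ℚ) * s := hEq_pow xm N hxm_eqs us hus
    have hco : coeff us (x ^ N) = coeff us (xm ^ N) := by
      by_contra hcon
      have : us ∈ (x ^ N - xm ^ N).support := by
        rw [mem_support_iff, coeff_sub]
        exact sub_ne_zero_of_ne hcon
      exact absurd hLus (ne_of_gt (hdiff us this))
    have husx : us ∈ (x ^ N).support := by
      rw [mem_support_iff, hco]
      exact mem_support_iff.mp hus
    -- contradiction with the integral equation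
    rw [heq] at husx
    rw [mem_support_iff] at husx
    rw [coeff_neg, neg_ne_zero, coeff_sum] at husx
    obtain ⟨i, hi, hine⟩ := Finset.exists_ne_zero_of_sum_ne_zero husx
    rw [Finset.mem_range] at hi
    have hmem : us ∈ ((p.coeff i : MvPolynomial (Fin n) k) * x ^ i).support :=
      mem_support_iff.mpr hine
    have hc0 : ∀ w ∈ (p.coeff i : MvPolynomial (Fin n) k).support, (0 : ℚ) ≤ L w := by
      intro w hw
      exact hy w (hsupp_mem _ (p.coeff i).2 w hw)
    have hfin := hLB_mul 0 ((i : ℚ) * s) _ _ hc0 (hLB_pow s x i hs_le) us hmem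
    rw [hLus] at hfin
    have hiN : (i : ℚ) ≤ (N : ℚ) - 1 := by
      have : (i : ℚ) + 1 ≤ (N : ℚ) := by exact_mod_cast hi
      linarith
    nlinarith [hfin, hiN, hs_neg]
  -- now the two directions
  intro x
  constructor
  · -- easy direction: Asat is integral over A
    intro hx
    have hle : Asat ≤ Subalgebra.restrictScalars k
        (integralClosure ↥A (MvPolynomial (Fin n) k)) := by
      rw [hAsat]
      apply Algebra.adjoin_le
      rintro g ⟨v, hvMsat, rfl⟩
      rw [hMsat] at hvMsat
      obtain ⟨m, hm, hmv⟩ := hvMsat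
      have hmem : monomial (m • v) (1 : k) ∈ A := by
        rw [hA]; exact Algebra.subset_adjoin ⟨m • v, hmv, rfl⟩
      show IsIntegral ↥A (monomial v (1 : k))
      refine ⟨Polynomial.X ^ m - Polynomial.C (⟨monomial (m • v) 1, hmem⟩ : ↥A),
        Polynomial.monic_X_pow_sub_C _ hm.ne', ?_⟩
      rw [← Polynomial.aeval_def]
      rw [map_sub, map_pow, Polynomial.aeval_X, Polynomial.aeval_C]
      have h1 : (monomial v (1 : k)) ^ m = monomial (m • v) 1 := by
        rw [monomial_pow, one_pow]
      have h2 : (algebraMap ↥A (MvPolynomial (Fin n) k))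
          (⟨monomial (m • v) 1, hmem⟩ : ↥A) = monomial (m • v) 1 := rfl
      rw [h1, h2, sub_self]
    exact hle hx
  · -- hard direction
    intro hx
    obtain ⟨F, hF⟩ := hfg
    have hFM : (F : Set (Fin n →₀ ℕ)) ⊆ (M : Set (Fin n →₀ ℕ)) := by
      rw [← hF]; exact AddSubmonoid.subset_closure
    rw [hAsat, ← support_sum_monomial_coeff x]
    apply Subalgebra.sum_mem
    intro v hv
    -- show v ∈ Msat via Farkas
    have hvMsat : v ∈ Msat := by
      rw [hMsat]
      set w : Fin F.card → (Fin n → ℚ) := fun i => e ((F.equivFin.symm i) : (Fin n →₀ ℕ))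
        with hw
      have hex : ∃ c : Fin F.card → ℚ, (∀ i, 0 ≤ c i) ∧ ∑ i, c i • w i = e v := by
        by_contra hcon
        obtain ⟨y, hy, hvy⟩ := myFarkas F.card w (e v) hcon
        have hyM : ∀ u ∈ M, 0 ≤ e u ⬝ᵥ y := by
          intro u hu
          rw [← hF] at hu
          induction hu using AddSubmonoid.closure_induction with
          | mem g hg =>
              have : w (F.equivFin ⟨g, hg⟩) = e g := by
                rw [hw]; simp
              rw [← this]; exact hy _
          | zero => rw [e_zero, zero_dotProduct]
          | add a b ha hb iha ihb =>
              rw [e_add, add_dotProduct]; exact add_nonneg iha ihb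
        exact absurd (key y hyM x hx v hv) (not_le.mpr hvy)
      obtain ⟨c, hc, hcsum⟩ := hex
      -- clear denominators
      set D : ℕ := ∏ i, (c i).den with hD
      have hDpos : 0 < D := Finset.prod_pos fun i _ => (c i).den_pos
      have hden : ∀ i : Fin F.card, ∃ d : ℕ, (d : ℚ) = (D : ℚ) * c i := by
        intro i
        obtain ⟨t, ht⟩ := Finset.dvd_prod_of_mem (fun i => (c i).den)
          (Finset.mem_univ i)
        refine ⟨t * (c i).num.toNat, ?_⟩
        have hnum : ((c i).num.toNat : ℤ) = (c i).num :=
          Int.toNat_of_nonneg (Rat.num_nonneg.mpr (hc i))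
        have hden_mul : ((c i).den : ℚ) * c i = (c i).num := by
          rw [mul_comm]; exact_mod_cast Rat.mul_den_eq_num (c i)
        rw [← hD] at ht
        have hnumQ : (((c i).num.toNat : ℕ) : ℚ) = ((c i).num : ℚ) := by exact_mod_cast hnum
        have hDQ : (D : ℚ) = ((c i).den : ℚ) * t := by exact_mod_cast ht
        push_cast
        rw [hnumQ, hDQ, ← hden_mul]
        ring
      choose d hd using hden
      refine ⟨D, hDpos, ?_⟩
      have hvrep : D • v = ∑ i, d i • ((F.equivFin.symm i : (Fin n →₀ ℕ))) := by
        apply e_inj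
        let E : (Fin n →₀ ℕ) →+ (Fin n → ℚ) := AddMonoidHom.mk' e e_add
        have hesum : e (∑ i, d i • ((F.equivFin.symm i : (Fin n →₀ ℕ))))
            = ∑ i, e (d i • ((F.equivFin.symm i : (Fin n →₀ ℕ)))) :=
          map_sum E _ _
        calc e (D • v) = (D : ℚ) • e v := e_smul D v
          _ = (D : ℚ) • ∑ i, c i • w i := by rw [hcsum]
          _ = ∑ i, ((D : ℚ) * c i) • w i := by
              rw [Finset.smul_sum]
              exact Finset.sum_congr rfl fun i _ => smul_smul _ _ _
          _ = ∑ i, (d i : ℚ) • w i :=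
              Finset.sum_congr rfl fun i _ => by rw [← hd i]
          _ = e (∑ i, d i • ((F.equivFin.symm i : (Fin n →₀ ℕ)))) := by
              rw [hesum]
              exact Finset.sum_congr rfl fun i _ => (e_smul _ _).symm
      rw [hvrep]
      apply AddSubmonoid.sum_mem
      intro i _
      exact AddSubmonoid.nsmul_mem M (hFM (F.equivFin.symm i).2) _
    have h1 : monomial v (coeff v x) = (coeff v x) • monomial v (1 : k) := by
      rw [smul_monomial, smul_eq_mul, mul_one]
    rw [h1]
    refine Subalgebra.smul_mem _ ?_ _
    exact Algebra.subset_adjoin ⟨v, hvMsat, rfl⟩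
end
end
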